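/- The map Φ₂ : L¹-into-itself given by Φ₂(f) = |f| (pointwise absolute value) on bounded measurable functions on a compact set 𝒳 is directionally Hadamard differentiable at every h with respect to the L¹-norm, with derivative (Φ₂)'_h(f)(x) = sgn(h(x))·f(x) for x with h(x) ≠ 0 and (Φ₂)'_h(f)(x) = |f(x)| for x with h(x) = 0. That is, for any sequences tₙ → 0⁺ of positive reals and xₙ → x in L¹-norm (with xₙ, x bounded), ‖(|h + tₙxₙ| − |h|)/tₙ − (Φ₂)'_h(x)‖₁ → 0. -/

import Mathlib

open MeasureTheory Filter Set

private lemma measurable_realSign : Measurable Real.sign := by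
  unfold Real.sign
  exact Measurable.ite (measurableSet_lt measurable_id measurable_const)
    measurable_const
    (Measurable.ite (measurableSet_lt measurable_const measurable_id)
      measurable_const measurable_const)

private lemma quot_eq_zero {a tt : ℝ} (htt : 0 < tt) :
    (|(0:ℝ) + tt * a| - |(0:ℝ)|) / tt = |a| := by
  rw [zero_add, abs_zero, sub_zero, abs_mul, abs_of_pos htt,
    mul_div_cancel_left₀ _ htt.ne']

private lemma quot_eq_sign {a b tt : ℝ} (htt : 0 < tt) (hb : b ≠ 0)
    (hlt : tt * |a| < |b|) :
    (|b + tt * a| - |b|) / tt = Real.sign b * a := by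
  rcases lt_or_gt_of_ne hb with hneg | hpos
  · rw [abs_of_neg hneg] at hlt
    have h1 : b + tt * a < 0 := by
      have h2 : tt * a ≤ tt * |a| := by
        have := le_abs_self a; nlinarith
      linarith
    rw [abs_of_neg h1, abs_of_neg hneg, Real.sign_of_neg hneg]
    field_simp; ring
  · rw [abs_of_pos hpos] at hlt
    have h1 : 0 < b + tt * a := by
      have h2 : -(tt * a) ≤ tt * |a| := by
        have := neg_abs_le a; nlinarith
      linarith
    rw [abs_of_pos h1, abs_of_pos hpos, Real.sign_of_pos hpos]
    field_simp; ring

/-- Pointwise bound for the difference quotient. -/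
private lemma quot_bound {a b tt : ℝ} (htt : 0 < tt) :
    |(|b + tt * a| - |b|) / tt| ≤ |a| := by
  rw [abs_div, abs_of_pos htt, div_le_iff₀ htt]
  calc abs (|b + tt * a| - |b|) ≤ |b + tt * a - b| := abs_abs_sub_abs_le_abs_sub _ _
    _ = tt * |a| := by rw [add_sub_cancel_left, abs_mul, abs_of_pos htt]
    _ = |a| * tt := mul_comm _ _

private lemma deriv_bound (a b : ℝ) :
    |(if b = 0 then |a| else Real.sign b * a)| ≤ |a| := by
  split_ifs with hb
  · simp
  · rw [abs_mul]
    rcases Real.sign_apply_eq_of_ne_zero b hb with hs | hs <;> rw [hs] <;> simp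

/-- Directional Hadamard differentiability of the pointwise absolute value map
`Φ₂(f) = |f|` on bounded measurable functions on a compact set `X`, with respect
to the `L¹`-norm: for `tₙ → 0⁺` and `xₙ → x` in `L¹`, the difference quotients
converge in `L¹` to `(Φ₂)'_h(x) = sgn(h)·x` on `{h ≠ 0}` and `|x|` on `{h = 0}`. -/
theorem abs_map_directionally_hadamard_differentiable
    {d : ℕ} (X : Set (Fin d → ℝ)) (hX : IsCompact X)
    (h : (Fin d → ℝ) → ℝ) (hhm : Measurable h) (Mh : ℝ) (hhb : ∀ y ∈ X, |h y| ≤ Mh)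
    (t : ℕ → ℝ) (ht : ∀ n, 0 < t n) (ht0 : Tendsto t atTop (nhds 0))
    (xs : ℕ → (Fin d → ℝ) → ℝ) (x : (Fin d → ℝ) → ℝ)
    (hxm : ∀ n, Measurable (xs n)) (hx : Measurable x)
    (Mn : ℕ → ℝ) (hxb : ∀ n, ∀ y ∈ X, |xs n y| ≤ Mn n)
    (Mx : ℝ) (hxb' : ∀ y ∈ X, |x y| ≤ Mx)
    (hL1 : Tendsto (fun n => ∫ y in X, |xs n y - x y|) atTop (nhds 0)) :
    Tendsto
      (fun n => ∫ y in X,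
        |(|h y + t n * xs n y| - |h y|) / t n -
          (if h y = 0 then |x y| else Real.sign (h y) * x y)|)
      atTop (nhds 0) := by
  have hXm : MeasurableSet X := hX.measurableSet
  have hXfin : volume X < ⊤ := hX.measure_lt_top
  -- a bounded measurable function is integrable on X
  have intg : ∀ (f : (Fin d → ℝ) → ℝ) (C : ℝ), Measurable f →
      (∀ y ∈ X, |f y| ≤ C) → IntegrableOn f X := by
    intro f C hf hb
    refine Integrable.mono' (integrableOn_const (C := C) hXfin.ne)
      hf.aestronglyMeasurable ?_
    filter_upwards [ae_restrict_mem hXm] with y hy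
    simpa using hb y hy
  -- the derivative function
  set D : (Fin d → ℝ) → ℝ :=
    fun y => if h y = 0 then |x y| else Real.sign (h y) * x y with hD
  have hDm : Measurable D := by
    apply Measurable.ite (hhm (measurableSet_singleton 0)) hx.abs
    exact (measurable_realSign.comp hhm).mul hx
  have hDb : ∀ y, |D y| ≤ |x y| := fun y => deriv_bound (x y) (h y)
  -- the one-function difference quotient error
  set g : ℕ → (Fin d → ℝ) → ℝ :=
    fun n y => |(|h y + t n * x y| - |h y|) / t n - D y| with hg
  have hgm : ∀ n, Measurable (g n) := fun n =>
    ((((hhm.add (hx.const_mul (t n))).abs.sub hhm.abs).div_const _).sub hDm).abs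
  have hgb : ∀ n y, g n y ≤ 2 * |x y| := by
    intro n y
    calc g n y ≤ |(|h y + t n * x y| - |h y|) / t n| + |D y| := abs_sub _ _
      _ ≤ |x y| + |x y| := add_le_add (quot_bound (ht n)) (hDb y)
      _ = 2 * |x y| := by ring
  -- pointwise convergence of `g n y` to `0`
  have hgtendpt : ∀ y, Tendsto (fun n => g n y) atTop (nhds 0) := by
    intro y
    by_cases hy : h y = 0
    · have : ∀ n, g n y = 0 := by
        intro n
        simp only [hg, hD, hy, if_true, eq_self_iff_true]
        rw [hy] at *
        rw [quot_eq_zero (ht n)]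
        simp
      simpa [this] using tendsto_const_nhds
    · have hpos : 0 < |h y| := abs_pos.2 hy
      have h1 : Tendsto (fun n => t n * |x y|) atTop (nhds 0) := by
        simpa using ht0.mul_const |x y|
      have h2 : ∀ᶠ n in atTop, t n * |x y| < |h y| :=
        h1.eventually (eventually_lt_nhds hpos)
      refine Tendsto.congr' ?_ tendsto_const_nhds
      filter_upwards [h2] with n hn
      simp only [hg, hD, hy, if_false]
      rw [quot_eq_sign (ht n) hy hn]
      simp [hD, hy]
  -- dominated convergence for `∫ g n`
  have hgtend : Tendsto (fun n => ∫ y in X, g n y) atTop (nhds 0) := by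
    have h0 : (0:ℝ) = ∫ _ in X, (0:ℝ) := by simp
    rw [h0]
    refine tendsto_integral_of_dominated_convergence (fun _ => 2 * Mx)
      (fun n => (hgm n).aestronglyMeasurable) ?_ ?_ ?_
    · exact integrableOn_const hXfin.ne
    · intro n
      filter_upwards [ae_restrict_mem hXm] with y hy
      have := hgb n y
      have h2 := hxb' y hy
      rw [Real.norm_eq_abs, abs_of_nonneg (abs_nonneg _)]
      nlinarith [abs_nonneg (x y)]
    · filter_upwards with y using hgtendpt y
  -- the main squeeze
  refine squeeze_zero (fun n => integral_nonneg fun y => abs_nonneg _)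
    (fun n => ?_) (by simpa using hL1.add hgtend)
  -- pointwise: integrand ≤ |xs n - x| + g n
  have hpt : ∀ y, |(|h y + t n * xs n y| - |h y|) / t n - D y| ≤
      |xs n y - x y| + g n y := by
    intro y
    have key : |(|h y + t n * xs n y| - |h y|) / t n -
        (|h y + t n * x y| - |h y|) / t n| ≤ |xs n y - x y| := by
      rw [div_sub_div_same, abs_div, abs_of_pos (ht n), div_le_iff₀ (ht n)]
      have e : (|h y + t n * xs n y| - |h y|) - (|h y + t n * x y| - |h y|)
          = |h y + t n * xs n y| - |h y + t n * x y| := by ring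
      rw [e]
      calc abs (|h y + t n * xs n y| - |h y + t n * x y|)
          ≤ |(h y + t n * xs n y) - (h y + t n * x y)| := abs_abs_sub_abs_le_abs_sub _ _
        _ = t n * |xs n y - x y| := by
            rw [show (h y + t n * xs n y) - (h y + t n * x y)
              = t n * (xs n y - x y) by ring, abs_mul, abs_of_pos (ht n)]
        _ = |xs n y - x y| * t n := mul_comm _ _
    calc |(|h y + t n * xs n y| - |h y|) / t n - D y|
        ≤ |(|h y + t n * xs n y| - |h y|) / t n - (|h y + t n * x y| - |h y|) / t n|
          + |(|h y + t n * x y| - |h y|) / t n - D y| := abs_sub_le _ _ _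
      _ ≤ |xs n y - x y| + g n y := add_le_add key le_rfl
  -- integrability of the dominating function
  have hint1 : IntegrableOn (fun y => |xs n y - x y|) X := by
    refine intg _ (Mn n + Mx) ((hxm n).sub hx).abs fun y hy => ?_
    rw [abs_abs]
    calc |xs n y - x y| ≤ |xs n y| + |x y| := abs_sub _ _
      _ ≤ Mn n + Mx := add_le_add (hxb n y hy) (hxb' y hy)
  have hint2 : IntegrableOn (g n) X := by
    refine intg _ (2 * Mx) (hgm n) fun y hy => ?_
    rw [abs_of_nonneg (abs_nonneg _)]
    have := hgb n y
    have h2 := hxb' y hy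
    nlinarith [abs_nonneg (x y)]
  have step1 : (∫ y in X, |(|h y + t n * xs n y| - |h y|) / t n - D y|)
      ≤ (∫ y in X, |xs n y - x y|) + ∫ y in X, g n y := by
    rw [← integral_add hint1 hint2]
    refine integral_mono_of_nonneg ?_ (hint1.add hint2) ?_
    · filter_upwards with y using abs_nonneg _
    · filter_upwards with y using hpt y
  exact step1
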